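/- Let X be an N×N real random matrix that is almost surely symmetric positive semidefinite, with ordered eigenvalues λ₁(X) ≥ λ₂(X) ≥ ⋯ ≥ 0, and fix α > 0. Assume there exist constants c > 0 and t₀ > 0 such that P(λ₁(X) > t) ≥ c·t^{−α} for all t ≥ t₀, and that E[(λ₁(X)·λ₂(X))^{α/2}] < ∞. Then P(λ₂(X) > t) / P(λ₁(X) > t) → 0 as t → ∞. -/

import Mathlib

open MeasureTheory ProbabilityTheory Matrix Filter
open scoped ENNReal Topology

noncomputable section

/-- The space of `N × N` real matrices. -/
abbrev Mat (N : ℕ) := Matrix (Fin N) (Fin N) ℝ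

instance (N : ℕ) : MeasurableSpace (Mat N) :=
  inferInstanceAs (MeasurableSpace (Fin N → Fin N → ℝ))

instance (N : ℕ) : BorelSpace (Mat N) :=
  inferInstanceAs (BorelSpace (Fin N → Fin N → ℝ))

open scoped Classical in
/-- The eigenvalues of a matrix (junk value `0` if the matrix is not symmetric). -/
def eigs {N : ℕ} (s : Mat N) : Fin N → ℝ :=
  if h : s.IsHermitian then h.eigenvalues else fun _ => 0

/-- The largest eigenvalue of a symmetric matrix. -/
def lambdaMax {N : ℕ} (s : Mat N) : ℝ := ⨆ i, eigs s i

/-- The eigenvalues of a symmetric matrix in nonincreasing order: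
`eigDesc s k` is the `(k+1)`-th largest eigenvalue `λ_{k+1}(s)`. -/
def eigDesc {N : ℕ} (s : Mat N) (k : Fin N) : ℝ :=
  (eigs s ∘ Tuple.sort (eigs s)) k.rev

open scoped Classical in
/-- The positive semidefinite square root of a positive semidefinite matrix
(junk value `0` otherwise). -/
def msqrt {N : ℕ} (a : Mat N) : Mat N :=
  if h : a.PosSemidef then
    (h.1.eigenvectorUnitary : Mat N) * diagonal ((↑) ∘ (Real.sqrt ∘ h.1.eigenvalues)) *
      (star h.1.eigenvectorUnitary : Mat N)
  else 0

/-- `log⁺ x = max (log x) 0`. -/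
def logPlus (x : ℝ) : ℝ := max (Real.log x) 0

/-- The expectation of a (not necessarily integrable) real random variable, with values in
`[-∞, +∞]`: the difference of the lower integrals of the positive and negative parts. -/
def sInt {Ω : Type*} [MeasurableSpace Ω] (P : Measure Ω) (f : Ω → ℝ) : EReal :=
  ((∫⁻ ω, ENNReal.ofReal (f ω) ∂P : ℝ≥0∞) : EReal) -
    ((∫⁻ ω, ENNReal.ofReal (-f ω) ∂P : ℝ≥0∞) : EReal)

/-- `leftProd A n = A₁ ⋯ A_n` (`0`-indexed: `A 0 * A 1 * ⋯ * A (n-1)`). -/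
def leftProd {Ω : Type*} {N : ℕ} (A : ℕ → Ω → Mat N) : ℕ → Ω → Mat N
  | 0 => fun _ => 1
  | n + 1 => fun ω => leftProd A n ω * A n ω

/-- The top Lyapunov exponent
`γ = inf_{n ≥ 1} (1/n) E[log λ_max(A₁ ⋯ A_n A_nᵀ ⋯ A₁ᵀ)]`, a value in `[-∞, +∞)`. -/
def lyap {Ω : Type*} [MeasurableSpace Ω] {N : ℕ} (P : Measure Ω) (A : ℕ → Ω → Mat N) : EReal :=
  ⨅ n : ℕ, (((1 : ℝ) / (n + 1) : ℝ) : EReal) *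
    sInt P (fun ω => Real.log (lambdaMax (leftProd A (n + 1) ω * (leftProd A (n + 1) ω)ᵀ)))

/-- The `k × k` leading principal submatrix. -/
def subK {N k : ℕ} (hk : k ≤ N) (x : Mat N) : Mat k :=
  x.submatrix (Fin.castLE hk) (Fin.castLE hk)

end


section AuxLemmas

open Matrix

variable {N : ℕ}

lemma myConjPow (U D : Mat N) (h1 : star U * U = 1) (h2 : U * star U = 1) (k : ℕ) :
    (U * D * star U) ^ k = U * D ^ k * star U := by
  induction k with
  | zero => simpa using h2.symm
  | succ m ih =>
    rw [pow_succ, ih, pow_succ]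
    simp only [Matrix.mul_assoc]
    rw [← Matrix.mul_assoc (star U) U, h1, Matrix.one_mul]

lemma my_trace_pow_eq {s : Mat N} (h : s.IsHermitian) (k : ℕ) :
    (s ^ k).trace = ∑ i, h.eigenvalues i ^ k := by
  have hU := h.eigenvectorUnitary.prop
  rw [Unitary.mem_iff] at hU
  have key : s ^ k = (h.eigenvectorUnitary : Mat N) *
      (Matrix.diagonal (RCLike.ofReal ∘ h.eigenvalues)) ^ k *
      (star (h.eigenvectorUnitary : Mat N)) := by
    rw [← myConjPow _ _ hU.1 hU.2]; congr 1; exact h.spectral_theorem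
  rw [key, Matrix.trace_mul_comm, ← Matrix.mul_assoc, hU.1, Matrix.one_mul,
    Matrix.diagonal_pow, Matrix.trace_diagonal]
  simp [RCLike.ofReal]

/-- `((tr s^k)^2 - tr s^(2k))`. -/
noncomputable def myFk (k : ℕ) (s : Mat N) : ℝ := ((s ^ k).trace) ^ 2 - (s ^ (2 * k)).trace

lemma myFk_eq {s : Mat N} (h : s.IsHermitian) (k : ℕ) :
    myFk k s = ∑ p ∈ (Finset.univ : Finset (Fin N)).offDiag,
      (h.eigenvalues p.1 * h.eigenvalues p.2) ^ k := by
  unfold myFk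
  rw [my_trace_pow_eq h, my_trace_pow_eq h]
  have h1 : (∑ i, h.eigenvalues i ^ k) ^ 2
      = ∑ p ∈ Finset.univ ×ˢ (Finset.univ : Finset (Fin N)),
          (h.eigenvalues p.1 * h.eigenvalues p.2) ^ k := by
    rw [sq, Finset.sum_mul_sum, Finset.sum_product]
    simp [mul_pow]
  rw [h1, ← Finset.diag_union_offDiag (Finset.univ : Finset (Fin N)),
    Finset.sum_union (Finset.disjoint_diag_offDiag _), Finset.sum_diag]
  have h2 : ∀ i : Fin N, (h.eigenvalues i * h.eigenvalues i) ^ k = h.eigenvalues i ^ (2 * k) := by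
    intro i; rw [← sq, ← pow_mul]
  simp only [h2]
  ring

lemma my_isClosed_psd : IsClosed {s : Mat N | s.PosSemidef} := by
  have : {s : Mat N | s.PosSemidef}
      = {s : Mat N | sᴴ = s} ∩ ⋂ x : Fin N → ℝ, {s | 0 ≤ dotProduct (star x) (s *ᵥ x)} := by
    ext s; simp [Matrix.posSemidef_iff_dotProduct_mulVec, Matrix.IsHermitian, Set.mem_iInter, forall_and]
  rw [this]
  refine IsClosed.inter (isClosed_eq (continuous_id.matrix_conjTranspose) continuous_id)
    (isClosed_iInter fun x => isClosed_le continuous_const ?_)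
  exact (continuous_const : Continuous fun _ : Mat N => star x).dotProduct
    (continuous_id.matrix_mulVec continuous_const)

lemma my_continuous_Fk (k : ℕ) : Continuous fun s : Mat N => myFk k s :=
  ((continuous_pow k).matrix_trace.pow 2).sub (continuous_pow (2 * k)).matrix_trace

lemma my_rev0 (hN : 2 ≤ N) : (Fin.rev ⟨0, Nat.lt_of_lt_of_le (by norm_num) hN⟩ : Fin N) = ⟨N - 1, by omega⟩ := by
  ext; simp [Fin.rev]
lemma my_rev1 (hN : 2 ≤ N) : (Fin.rev ⟨1, Nat.lt_of_lt_of_le (by norm_num) hN⟩ : Fin N) = ⟨N - 2, by omega⟩ := by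
  ext; simp [Fin.rev]

lemma my_eigDesc_one_le_zero (hN : 2 ≤ N) (s : Mat N) :
    eigDesc s ⟨1, Nat.lt_of_lt_of_le (by norm_num) hN⟩ ≤ eigDesc s ⟨0, Nat.lt_of_lt_of_le (by norm_num) hN⟩ := by
  unfold eigDesc
  rw [my_rev0 hN, my_rev1 hN]
  exact Tuple.monotone_sort (eigs s) (by simp [Fin.le_def]; omega)

lemma my_pair_le (hN : 2 ≤ N) (s : Mat N) (hpos : ∀ i, 0 ≤ eigs s i) {i j : Fin N} (hij : i ≠ j) :
    eigs s i * eigs s j ≤ eigDesc s ⟨0, Nat.lt_of_lt_of_le (by norm_num) hN⟩ * eigDesc s ⟨1, Nat.lt_of_lt_of_le (by norm_num) hN⟩ := by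
  unfold eigDesc
  rw [my_rev0 hN, my_rev1 hN]
  set σ := Tuple.sort (eigs s) with hσ
  set g : Fin N → ℝ := eigs s ∘ σ with hg
  have hmono : Monotone g := Tuple.monotone_sort (eigs s)
  wlog hab : σ.symm i < σ.symm j generalizing i j
  · have hne : σ.symm i ≠ σ.symm j := fun h => hij (by simpa using congrArg σ h)
    have h : σ.symm j < σ.symm i := (hne.lt_or_gt.resolve_left hab)
    rw [mul_comm]; exact this hij.symm h
  have hi : eigs s i = g (σ.symm i) := by rw [hg]; simp
  have hj : eigs s j = g (σ.symm j) := by rw [hg]; simp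
  rw [hi, hj]
  have h1 : (σ.symm i : ℕ) ≤ N - 2 := by
    have h := Fin.lt_def.mp hab; have := (σ.symm j).isLt; omega
  have h2 : g (σ.symm i) ≤ g ⟨N - 2, by omega⟩ := hmono (by simp [Fin.le_def]; omega)
  have h3 : g (σ.symm j) ≤ g ⟨N - 1, by omega⟩ := hmono (by simp [Fin.le_def]; omega)
  have hnn : ∀ a, 0 ≤ g a := fun a => hpos _
  calc g (σ.symm i) * g (σ.symm j) ≤ g ⟨N-2, by omega⟩ * g ⟨N-1, by omega⟩ :=
        mul_le_mul h2 h3 (hnn _) (le_trans (hnn _) h2)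
    _ ≤ g ⟨N-1, by omega⟩ * g ⟨N-2, by omega⟩ := le_of_eq (mul_comm _ _)

lemma my_pair_exists (hN : 2 ≤ N) (s : Mat N) :
    ∃ i j : Fin N, i ≠ j ∧
      eigs s i * eigs s j = eigDesc s ⟨0, Nat.lt_of_lt_of_le (by norm_num) hN⟩ * eigDesc s ⟨1, Nat.lt_of_lt_of_le (by norm_num) hN⟩ := by
  refine ⟨Tuple.sort (eigs s) ⟨N-1, by omega⟩, Tuple.sort (eigs s) ⟨N-2, by omega⟩, ?_, ?_⟩
  · intro h
    have := (Tuple.sort (eigs s)).injective h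
    simp [Fin.ext_iff] at this; omega
  · unfold eigDesc; rw [my_rev0 hN, my_rev1 hN]; rfl

lemma my_eigs_eq {s : Mat N} (hp : s.PosSemidef) : eigs s = hp.1.eigenvalues := by
  simp only [eigs, dif_pos hp.1]

lemma my_eigs_nonneg {s : Mat N} (hp : s.PosSemidef) (i : Fin N) : 0 ≤ eigs s i := by
  rw [my_eigs_eq hp]; exact hp.eigenvalues_nonneg i

lemma my_eigDesc_eq_eigs {s : Mat N} (k : Fin N) :
    eigDesc s k = eigs s (Tuple.sort (eigs s) k.rev) := rfl

lemma my_eigDesc_nonneg {s : Mat N} (hp : s.PosSemidef) (k : Fin N) : 0 ≤ eigDesc s k := by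
  rw [my_eigDesc_eq_eigs]; exact my_eigs_nonneg hp _

lemma myFk_eq_eigs {s : Mat N} (hp : s.PosSemidef) (k : ℕ) :
    myFk k s = ∑ p ∈ (Finset.univ : Finset (Fin N)).offDiag,
      (eigs s p.1 * eigs s p.2) ^ k := by
  rw [myFk_eq hp.1 k]
  simp_rw [my_eigs_eq hp]

lemma myFk_bounds (hN : 2 ≤ N) {s : Mat N} (hp : s.PosSemidef) (k : ℕ) :
    (eigDesc s ⟨0, Nat.lt_of_lt_of_le (by norm_num) hN⟩ * eigDesc s ⟨1, Nat.lt_of_lt_of_le (by norm_num) hN⟩) ^ k ≤ myFk k s ∧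
      myFk k s ≤ (N ^ 2 : ℝ) * (eigDesc s ⟨0, Nat.lt_of_lt_of_le (by norm_num) hN⟩ * eigDesc s ⟨1, Nat.lt_of_lt_of_le (by norm_num) hN⟩) ^ k := by
  set p := eigDesc s ⟨0, Nat.lt_of_lt_of_le (by norm_num) hN⟩ * eigDesc s ⟨1, Nat.lt_of_lt_of_le (by norm_num) hN⟩ with hpdef
  have hterm_nonneg : ∀ q : Fin N × Fin N, 0 ≤ (eigs s q.1 * eigs s q.2) ^ k :=
    fun q => pow_nonneg (mul_nonneg (my_eigs_nonneg hp _) (my_eigs_nonneg hp _)) k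
  have hpnn : 0 ≤ p := mul_nonneg (my_eigDesc_nonneg hp _) (my_eigDesc_nonneg hp _)
  constructor
  · obtain ⟨i, j, hij, hprod⟩ := my_pair_exists hN s
    rw [myFk_eq_eigs hp k]
    have hmem : (i, j) ∈ (Finset.univ : Finset (Fin N)).offDiag := by
      simp [Finset.mem_offDiag, hij]
    calc p ^ k = (eigs s i * eigs s j) ^ k := by rw [hprod]
      _ ≤ _ := Finset.single_le_sum (fun q _ => hterm_nonneg q) hmem
  · rw [myFk_eq_eigs hp k]
    have hle : ∀ q ∈ (Finset.univ : Finset (Fin N)).offDiag,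
        (eigs s q.1 * eigs s q.2) ^ k ≤ p ^ k := by
      intro q hq
      rw [Finset.mem_offDiag] at hq
      exact pow_le_pow_left₀ (mul_nonneg (my_eigs_nonneg hp _) (my_eigs_nonneg hp _))
        (my_pair_le hN s (my_eigs_nonneg hp) hq.2.2) k
    calc ∑ q ∈ (Finset.univ : Finset (Fin N)).offDiag, (eigs s q.1 * eigs s q.2) ^ k
        ≤ (Finset.univ : Finset (Fin N)).offDiag.card • p ^ k :=
          Finset.sum_le_card_nsmul _ _ _ hle
      _ = ((Finset.univ : Finset (Fin N)).offDiag.card : ℝ) * p ^ k := nsmul_eq_mul _ _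
      _ ≤ (N ^ 2 : ℝ) * p ^ k := by
          apply mul_le_mul_of_nonneg_right _ (pow_nonneg hpnn k)
          have h1 := Finset.offDiag_card (Finset.univ : Finset (Fin N))
          have : (Finset.univ : Finset (Fin N)).offDiag.card ≤ N ^ 2 := by
            rw [h1]; simp [sq]
          exact_mod_cast this

lemma my_tendsto_rpow_aux (hN : 2 ≤ N) :
    Tendsto (fun m : ℕ => ((N:ℝ) ^ 2) ^ ((1:ℝ) / (m + 1) : ℝ)) atTop (𝓝 1) := by
  have hNpos : (0:ℝ) < (N:ℝ) ^ 2 := by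
    have : (0:ℝ) < (N:ℝ) := by exact_mod_cast Nat.lt_of_lt_of_le (by norm_num) hN
    positivity
  have key : ∀ m : ℕ, ((N:ℝ) ^ 2) ^ ((1:ℝ) / (m + 1) : ℝ)
      = Real.exp (((1:ℝ) / (m + 1)) * Real.log ((N:ℝ) ^ 2)) := by
    intro m
    rw [Real.rpow_def_of_pos hNpos, mul_comm]
  simp only [key]
  have h0 : Tendsto (fun m : ℕ => ((1:ℝ) / (m + 1)) * Real.log ((N:ℝ) ^ 2)) atTop (𝓝 0) := by
    have := (tendsto_one_div_add_atTop_nhds_zero_nat).mul_const (Real.log ((N:ℝ) ^ 2))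
    rwa [zero_mul] at this
  have := (Real.continuous_exp.continuousAt.tendsto).comp h0
  simpa [Real.exp_zero, Function.comp_def] using this

lemma my_tendsto_fk (hN : 2 ≤ N) {s : Mat N} (hp : s.PosSemidef) :
    Tendsto (fun m : ℕ => myFk (m + 1) s ^ ((1:ℝ) / (m + 1) : ℝ)) atTop
      (𝓝 (eigDesc s ⟨0, Nat.lt_of_lt_of_le (by norm_num) hN⟩ * eigDesc s ⟨1, Nat.lt_of_lt_of_le (by norm_num) hN⟩)) := by
  have hbounds := myFk_bounds hN hp
  set p := eigDesc s ⟨0, Nat.lt_of_lt_of_le (by norm_num) hN⟩ * eigDesc s ⟨1, Nat.lt_of_lt_of_le (by norm_num) hN⟩ with hpdef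
  have hpnn : 0 ≤ p := mul_nonneg (my_eigDesc_nonneg hp _) (my_eigDesc_nonneg hp _)
  have hexp_pos : ∀ m : ℕ, (0:ℝ) < (1:ℝ) / (m + 1) := by
    intro m; positivity
  have hcast : ∀ m : ℕ, ((m + 1 : ℕ) : ℝ) = (m : ℝ) + 1 := by intro m; push_cast; ring
  have hid : ∀ m : ℕ, (p ^ (m + 1)) ^ ((1:ℝ) / (m + 1) : ℝ) = p := by
    intro m
    rw [← Real.rpow_natCast p (m + 1), ← Real.rpow_mul hpnn, hcast]
    rw [mul_one_div, div_self (by positivity), Real.rpow_one]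
  have hlow : ∀ m : ℕ, p ≤ myFk (m + 1) s ^ ((1:ℝ) / (m + 1) : ℝ) := by
    intro m
    calc p = (p ^ (m + 1)) ^ ((1:ℝ) / (m + 1) : ℝ) := (hid m).symm
      _ ≤ _ := Real.rpow_le_rpow (pow_nonneg hpnn _) (hbounds (m + 1)).1 (hexp_pos m).le
  have hup : ∀ m : ℕ, myFk (m + 1) s ^ ((1:ℝ) / (m + 1) : ℝ)
      ≤ ((N:ℝ) ^ 2) ^ ((1:ℝ) / (m + 1) : ℝ) * p := by
    intro m
    have h1 : myFk (m + 1) s ^ ((1:ℝ) / (m + 1) : ℝ)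
        ≤ ((N ^ 2 : ℝ) * p ^ (m + 1)) ^ ((1:ℝ) / (m + 1) : ℝ) := by
      refine Real.rpow_le_rpow ?_ (hbounds (m + 1)).2 (hexp_pos m).le
      exact le_trans (pow_nonneg hpnn _) (hbounds (m + 1)).1
    rw [Real.mul_rpow (by positivity) (pow_nonneg hpnn _), hid m] at h1
    exact_mod_cast h1
  have hupt : Tendsto (fun m : ℕ => ((N:ℝ) ^ 2) ^ ((1:ℝ) / (m + 1) : ℝ) * p) atTop (𝓝 p) := by
    have := (my_tendsto_rpow_aux hN).mul_const p
    rwa [one_mul] at this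
  exact tendsto_of_tendsto_of_tendsto_of_le_of_le tendsto_const_nhds hupt hlow hup

open scoped Classical in
/-- `λ₁ λ₂` for psd matrices, junk `0` otherwise. -/
noncomputable def Hfun (hN : 2 ≤ N) (s : Mat N) : ℝ :=
  if s.PosSemidef then eigDesc s ⟨0, Nat.lt_of_lt_of_le (by norm_num) hN⟩ * eigDesc s ⟨1, Nat.lt_of_lt_of_le (by norm_num) hN⟩ else 0

open scoped Classical in
lemma measurable_Hfun (hN : 2 ≤ N) : Measurable (Hfun hN) := by
  have hmPSD : MeasurableSet {s : Mat N | s.PosSemidef} := my_isClosed_psd.measurableSet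
  set f : ℕ → Mat N → ℝ := fun m s =>
    if s.PosSemidef then myFk (m + 1) s ^ ((1:ℝ) / (m + 1) : ℝ) else 0 with hf
  have hfm : ∀ m, Measurable (f m) := by
    intro m
    apply Measurable.ite hmPSD _ measurable_const
    exact (Real.continuous_rpow_const (by positivity)).measurable.comp
      (my_continuous_Fk (m + 1)).measurable
  have hlim : ∀ s : Mat N, Tendsto (fun m => f m s) atTop (𝓝 (Hfun hN s)) := by
    intro s
    by_cases hp : s.PosSemidef
    · simp only [hf, Hfun, if_pos hp]
      exact my_tendsto_fk hN hp
    · simp only [hf, Hfun, if_neg hp]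
      exact tendsto_const_nhds
  exact measurable_of_tendsto_metrizable hfm (tendsto_pi_nhds.2 hlim)

end AuxLemmas

/-- If `P(λ₁(X) > t) ≥ c t^{-α}` for all `t ≥ t₀` and
`E[(λ₁(X) λ₂(X))^{α/2}] < ∞`, then `P(λ₂(X) > t) = o(P(λ₁(X) > t))` as `t → ∞`. -/
theorem lambda2_tail_littleO
    {N : ℕ} (hN : 2 ≤ N)
    {Ω : Type*} [MeasurableSpace Ω] (P : Measure Ω) [IsProbabilityMeasure P]
    (X : Ω → Mat N) (hX : Measurable X)
    (hXpsd : ∀ᵐ ω ∂P, (X ω).PosSemidef)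
    (α : ℝ) (hα : 0 < α) (c : ℝ) (hc : 0 < c) (t₀ : ℝ) (ht₀ : 0 < t₀)
    (hlow : ∀ t : ℝ, t₀ ≤ t →
      c * t ^ (-α) ≤ (P {ω | t < eigDesc (X ω) ⟨0, by omega⟩}).toReal)
    (hmom : ∫⁻ ω, ENNReal.ofReal
        ((eigDesc (X ω) ⟨0, by omega⟩ * eigDesc (X ω) ⟨1, by omega⟩) ^ (α / 2)) ∂P < ⊤) :
    Tendsto (fun t : ℝ =>
        (P {ω | t < eigDesc (X ω) ⟨1, by omega⟩}).toReal /
        (P {ω | t < eigDesc (X ω) ⟨0, by omega⟩}).toReal) atTop (𝓝 0) := by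
  
  classical
  have hα2 : (0:ℝ) < α / 2 := by linarith
  set G : Ω → ℝ≥0∞ := fun ω => ENNReal.ofReal (Hfun hN (X ω) ^ (α / 2)) with hGdef
  have hGmeas : Measurable G := by
    apply Measurable.ennreal_ofReal
    exact (Real.continuous_rpow_const hα2.le).measurable.comp ((measurable_Hfun hN).comp hX)
  have hGae : ∀ᵐ ω ∂P, G ω = ENNReal.ofReal
      ((eigDesc (X ω) ⟨0, by omega⟩ * eigDesc (X ω) ⟨1, by omega⟩) ^ (α / 2)) := by
    filter_upwards [hXpsd] with ω hp
    simp only [hGdef, Hfun, if_pos hp]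
  have hGint : ∫⁻ ω, G ω ∂P < ⊤ := by
    rw [lintegral_congr_ae hGae]; exact hmom
  set T : ℕ → ℝ≥0∞ := fun n => ∫⁻ ω in {ω' | (n : ℝ≥0∞) ≤ G ω'}, G ω ∂P with hTdef
  have hSmeas : ∀ a : ℝ≥0∞, MeasurableSet {ω' | a ≤ G ω'} :=
    fun a => measurableSet_le measurable_const hGmeas
  have hTtop : ∀ n, T n ≠ ⊤ :=
    fun n => (lt_of_le_of_lt (setLIntegral_le_lintegral _ _) hGint).ne
  have hT0 : Tendsto T atTop (𝓝 0) := by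
    have hrw : ∀ n : ℕ, T n = ∫⁻ ω, ({ω' | (n:ℝ≥0∞) ≤ G ω'}.indicator G) ω ∂P :=
      fun n => (lintegral_indicator (hSmeas _) G).symm
    rw [show (0:ℝ≥0∞) = ∫⁻ _, (0:ℝ≥0∞) ∂P by simp]
    refine Tendsto.congr (fun n => (hrw n).symm) ?_
    refine tendsto_lintegral_of_dominated_convergence G
      (fun n => hGmeas.indicator (hSmeas _))
      (fun n => Filter.Eventually.of_forall fun ω => Set.indicator_le_self _ _ _)
      hGint.ne ?_
    refine Filter.Eventually.of_forall fun ω => ?_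
    obtain ⟨n, hn⟩ := ENNReal.exists_nat_gt (show G ω ≠ ⊤ from ENNReal.ofReal_lt_top.ne)
    refine tendsto_const_nhds.congr' ?_
    filter_upwards [eventually_ge_atTop n] with m hm
    have hnot : ω ∉ {ω' | ((m:ℕ):ℝ≥0∞) ≤ G ω'} := by
      simp only [Set.mem_setOf_eq, not_le]
      exact lt_of_lt_of_le hn (by exact_mod_cast hm)
    have h0 : ({ω' | ((m:ℕ):ℝ≥0∞) ≤ G ω'}).indicator G ω = 0 :=
      Set.indicator_of_notMem hnot G
    exact h0.symm
  rw [Metric.tendsto_nhds]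
  intro ε hε
  have hcε : (0:ℝ≥0∞) < ENNReal.ofReal (c * ε) := ENNReal.ofReal_pos.mpr (by positivity)
  obtain ⟨n, hn⟩ := (hT0.eventually (gt_mem_nhds hcε)).exists
  have hTn := hn
  filter_upwards [eventually_ge_atTop t₀, eventually_ge_atTop (1:ℝ),
    (tendsto_rpow_atTop hα).eventually_ge_atTop (n:ℝ)] with t htt0 ht1 htn
  have htpos : (0:ℝ) < t := lt_of_lt_of_le one_pos ht1
  set a : ℝ≥0∞ := ENNReal.ofReal (t ^ α) with hadef
  -- a.e. inclusion of tail events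
  have hincl : ∀ᵐ ω ∂P, ω ∈ {ω' | t < eigDesc (X ω') ⟨1, by omega⟩} → ω ∈ {ω' | a ≤ G ω'} := by
    filter_upwards [hXpsd] with ω hp hmem
    have hlt : t < eigDesc (X ω) ⟨1, by omega⟩ := hmem
    have h12 : eigDesc (X ω) ⟨1, by omega⟩ ≤ eigDesc (X ω) ⟨0, by omega⟩ :=
      my_eigDesc_one_le_zero hN (X ω)
    have hHf : Hfun hN (X ω)
        = eigDesc (X ω) ⟨0, by omega⟩ * eigDesc (X ω) ⟨1, by omega⟩ := if_pos hp
    have hsq : t ^ (2:ℕ) < Hfun hN (X ω) := by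
      rw [hHf]
      calc t ^ (2:ℕ) = t * t := sq t
        _ < eigDesc (X ω) ⟨1, by omega⟩ * eigDesc (X ω) ⟨1, by omega⟩ :=
            mul_lt_mul hlt hlt.le htpos (le_trans htpos.le hlt.le)
        _ ≤ _ := mul_le_mul_of_nonneg_right h12 (le_trans (le_trans htpos.le hlt.le) le_rfl)
    have hrpow : t ^ α ≤ Hfun hN (X ω) ^ (α / 2) := by
      have h1 : (t ^ (2:ℕ) : ℝ) ^ (α / 2) ≤ Hfun hN (X ω) ^ (α / 2) :=
        Real.rpow_le_rpow (by positivity) hsq.le hα2.le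
      calc t ^ α = (t ^ (2:ℕ) : ℝ) ^ (α / 2) := by
            rw [← Real.rpow_natCast t 2, ← Real.rpow_mul htpos.le]
            congr 1
            push_cast; ring
        _ ≤ _ := h1
    exact le_trans (ENNReal.ofReal_le_ofReal hrpow) le_rfl
  -- Markov-type bound
  have hmono : P {ω' | t < eigDesc (X ω') ⟨1, by omega⟩} ≤ P {ω' | a ≤ G ω'} :=
    measure_mono_ae hincl
  have hsubset : {ω' | a ≤ G ω'} ⊆ {ω' | (n:ℝ≥0∞) ≤ G ω'} := by
    intro ω hω
    have hω' : a ≤ G ω := hω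
    refine le_trans ?_ hω'
    rw [hadef]
    calc ((n:ℝ≥0∞)) = ENNReal.ofReal (n:ℝ) := by simp [ENNReal.ofReal_natCast]
      _ ≤ ENNReal.ofReal (t ^ α) := ENNReal.ofReal_le_ofReal htn
  have hmarkov : a * P {ω' | a ≤ G ω'} ≤ T n := by
    calc a * P {ω' | a ≤ G ω'} = ∫⁻ _ in {ω' | a ≤ G ω'}, a ∂P :=
          (setLIntegral_const _ _).symm
      _ ≤ ∫⁻ ω in {ω' | a ≤ G ω'}, G ω ∂P := setLIntegral_mono hGmeas fun ω hω => hω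
      _ ≤ T n := lintegral_mono_set hsubset
  -- pass to real numbers
  have htα : (0:ℝ) < t ^ α := Real.rpow_pos_of_pos htpos α
  have hPle : (P {ω' | t < eigDesc (X ω') ⟨1, by omega⟩}).toReal
      ≤ (T n).toReal / t ^ α := by
    have h1 : t ^ α * (P {ω' | a ≤ G ω'}).toReal ≤ (T n).toReal := by
      have := ENNReal.toReal_mono (hTtop n) hmarkov
      rwa [ENNReal.toReal_mul, hadef, ENNReal.toReal_ofReal htα.le] at this
    have h2 : (P {ω' | t < eigDesc (X ω') ⟨1, by omega⟩}).toReal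
        ≤ (P {ω' | a ≤ G ω'}).toReal :=
      ENNReal.toReal_mono (measure_ne_top _ _) hmono
    rw [le_div_iff₀ htα]
    calc (P {ω' | t < eigDesc (X ω') ⟨1, by omega⟩}).toReal * t ^ α
        ≤ (P {ω' | a ≤ G ω'}).toReal * t ^ α := by
          exact mul_le_mul_of_nonneg_right h2 htα.le
      _ ≤ (T n).toReal := by rw [mul_comm]; exact h1
  -- lower bound on denominator
  have hden : c * t ^ (-α) ≤ (P {ω | t < eigDesc (X ω) ⟨0, by omega⟩}).toReal := hlow t htt0
  have hdenpos : (0:ℝ) < c * t ^ (-α) :=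
    mul_pos hc (Real.rpow_pos_of_pos htpos _)
  have hTnlt : (T n).toReal < c * ε := by
    rw [← ENNReal.lt_ofReal_iff_toReal_lt (hTtop n)]
    exact hTn
  have hratio : (P {ω | t < eigDesc (X ω) ⟨1, by omega⟩}).toReal /
      (P {ω | t < eigDesc (X ω) ⟨0, by omega⟩}).toReal < ε := by
    have hnum_nonneg : (0:ℝ) ≤ (P {ω | t < eigDesc (X ω) ⟨1, by omega⟩}).toReal :=
      ENNReal.toReal_nonneg
    have hdpos : (0:ℝ) < (P {ω | t < eigDesc (X ω) ⟨0, by omega⟩}).toReal :=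
      lt_of_lt_of_le hdenpos hden
    have hchain : (P {ω | t < eigDesc (X ω) ⟨1, by omega⟩}).toReal /
        (P {ω | t < eigDesc (X ω) ⟨0, by omega⟩}).toReal
        ≤ ((T n).toReal / t ^ α) / (c * t ^ (-α)) := by
      apply div_le_div₀ (by positivity) hPle hdenpos hden
    have heq : ((T n).toReal / t ^ α) / (c * t ^ (-α)) = (T n).toReal / c := by
      rw [Real.rpow_neg htpos.le]
      field_simp
    rw [heq] at hchain
    calc (P {ω | t < eigDesc (X ω) ⟨1, by omega⟩}).toReal /
          (P {ω | t < eigDesc (X ω) ⟨0, by omega⟩}).toReal ≤ (T n).toReal / c := hchain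
      _ < ε := by rwa [div_lt_iff₀ hc, mul_comm]
  have hnn : (0:ℝ) ≤ (P {ω | t < eigDesc (X ω) ⟨1, by omega⟩}).toReal /
      (P {ω | t < eigDesc (X ω) ⟨0, by omega⟩}).toReal :=
    div_nonneg ENNReal.toReal_nonneg ENNReal.toReal_nonneg
  rw [Real.dist_eq, sub_zero, abs_of_nonneg hnn]
  exact hratio
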